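/- Let ω = (ω₀, …, ω_{n+1}) be a primitive key sequence and θ ∈ (ℂ*)ⁿ. In the polynomial ring Â := ℂ[ŵ, ŷ₁, …, ŷ_{n+1}], let Î be the ideal generated by Ĝ₁, …, Ĝ_n, where Ĝ_k := ŵ^{α_k·ω_k − ω_{k+1}}·ŷ_{k+1} − ( ŷ_k^{α_k} − θ_k·∏_{j=1}^{k−1} ŷ_j^{β_{k,j}} ) (the exponent α_k·ω_k − ω_{k+1} is a positive integer by the definition of key sequence, and the product is empty for k = 1). Then the localization of Â/Î at the image of ŵ is isomorphic as a ℂ-algebra to ℂ[ŵ, ŵ⁻¹, ŷ₁], the ring of Laurent polynomials in ŵ that are polynomial in ŷ₁. -/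

import Mathlib

/-- `dks ω k` is `gcd(|ω₀|, …, |ω_k|)`. -/
def dks (ω : ℕ → ℤ) (k : ℕ) : ℕ :=
  (Finset.range (k + 1)).gcd fun j => (ω j).natAbs

/-- `alphaK ω k` is `α_k = d_{k−1}/d_k`. -/
def alphaK (ω : ℕ → ℤ) (k : ℕ) : ℕ := dks ω (k - 1) / dks ω k

/-- A key sequence `(ω₀, …, ω_{n+1})`. -/
def IsKeySequence (n : ℕ) (ω : ℕ → ℤ) : Prop :=
  1 ≤ ω 0 ∧ dks ω (n + 1) = 1 ∧
    ∀ k, 1 ≤ k → k ≤ n → ω (k + 1) < (alphaK ω k : ℤ) * ω k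

/-- A key sequence is primitive iff `ω_{n+1} > 0`. -/
def IsPrimitive (n : ℕ) (ω : ℕ → ℤ) : Prop := 0 < ω (n + 1)

/-- `β k` is, for `1 ≤ k ≤ n`, the unique representation tuple of `α_k·ω_k`. -/
def IsRepTuple (n : ℕ) (ω : ℕ → ℤ) (β : ℕ → ℕ → ℤ) : Prop :=
  ∀ k, 1 ≤ k → k ≤ n →
    (∀ j, 1 ≤ j → j < k → 0 ≤ β k j ∧ β k j < (alphaK ω j : ℤ)) ∧
      (alphaK ω k : ℤ) * ω k = ∑ j ∈ Finset.range k, β k j * ω j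

open Fin.NatCast in
/-- The polynomial `Ĝ_k = ŵ^{α_k·ω_k − ω_{k+1}}·ŷ_{k+1} − (ŷ_k^{α_k} − θ_k·∏_{j=1}^{k−1} ŷ_j^{β_{k,j}})`
in `Â = ℂ[ŵ, ŷ₁, …, ŷ_{n+1}]`, where `ŵ` is the variable of index `0` and `ŷ_j` the
variable of index `j`. -/
noncomputable def Ghat (n : ℕ) (ω : ℕ → ℤ) (θ : ℕ → ℂ) (β : ℕ → ℕ → ℤ) (k : ℕ) :
    MvPolynomial (Fin (n + 2)) ℂ :=
  MvPolynomial.X (0 : Fin (n + 2)) ^ (((alphaK ω k : ℤ) * ω k - ω (k + 1)).toNat) *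
      MvPolynomial.X ((k + 1 : ℕ) : Fin (n + 2)) -
    (MvPolynomial.X ((k : ℕ) : Fin (n + 2)) ^ alphaK ω k -
      MvPolynomial.C (θ k) *
        ∏ j ∈ Finset.Ico 1 k, MvPolynomial.X ((j : ℕ) : Fin (n + 2)) ^ (β k j).toNat)

/-- The ideal `Î = (Ĝ₁, …, Ĝ_n) ⊆ Â`. -/
noncomputable def Ihat (n : ℕ) (ω : ℕ → ℤ) (θ : ℕ → ℂ) (β : ℕ → ℕ → ℤ) :
    Ideal (MvPolynomial (Fin (n + 2)) ℂ) :=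
  Ideal.span (Ghat n ω θ β '' Set.Icc 1 n)

set_option synthInstance.maxHeartbeats 800000
set_option maxHeartbeats 1600000

namespace Aux5

open Polynomial LaurentPolynomial MvPolynomial
open Fin.NatCast

noncomputable abbrev BB : Type := Polynomial (LaurentPolynomial ℂ)

noncomputable def vB (ω : ℕ → ℤ) (θ : ℕ → ℂ) (β : ℕ → ℕ → ℤ) : ℕ → BB
  | 0 => Polynomial.C (T 1)
  | 1 => Polynomial.X
  | (k+2) =>
      Polynomial.C (T (ω (k+2) - (alphaK ω (k+1) : ℤ) * ω (k+1))) *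
        (vB ω θ β (k+1) ^ alphaK ω (k+1) -
          Polynomial.C (LaurentPolynomial.C (θ (k+1))) *
            ∏ j ∈ (Finset.Ico 1 (k+1)).attach, vB ω θ β j ^ (β (k+1) (j : ℕ)).toNat)
  decreasing_by
  · omega
  · have := (Finset.mem_Ico.mp j.2).2; omega

lemma vB_succ (ω : ℕ → ℤ) (θ : ℕ → ℂ) (β : ℕ → ℕ → ℤ) (k : ℕ) (hk : 1 ≤ k) :
    vB ω θ β (k+1) =
      Polynomial.C (T (ω (k+1) - (alphaK ω k : ℤ) * ω k)) *
        (vB ω θ β k ^ alphaK ω k -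
          Polynomial.C (LaurentPolynomial.C (θ k)) *
            ∏ j ∈ Finset.Ico 1 k, vB ω θ β j ^ (β k j).toNat) := by
  match k, hk with
  | (m+1), _ =>
    rw [vB]
    rw [Finset.prod_attach (Finset.Ico 1 (m+1)) (fun j => vB ω θ β j ^ (β (m+1) j).toNat)]

variable (n : ℕ) (ω : ℕ → ℤ) (θ : ℕ → ℂ) (β : ℕ → ℕ → ℤ)

noncomputable def fA : MvPolynomial (Fin (n+2)) ℂ →ₐ[ℂ] BB :=
  MvPolynomial.aeval (fun i => vB ω θ β i.val)

lemma fA_X (m : ℕ) (hm : m < n+2) :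
    fA n ω θ β (MvPolynomial.X ((m : ℕ) : Fin (n+2))) = vB ω θ β m := by
  rw [fA, MvPolynomial.aeval_X, Fin.val_cast_of_lt hm]

lemma algebraMap_BB (z : ℂ) :
    algebraMap ℂ BB z = Polynomial.C (LaurentPolynomial.C z) := by
  rw [Polynomial.algebraMap_apply, LaurentPolynomial.C_eq_algebraMap]

lemma fA_Ghat (hlt : ∀ k, 1 ≤ k → k ≤ n → ω (k+1) < (alphaK ω k : ℤ) * ω k)
    (k : ℕ) (h1 : 1 ≤ k) (h2 : k ≤ n) : fA n ω θ β (Ghat n ω θ β k) = 0 := by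
  have hEz : ((((alphaK ω k : ℤ) * ω k - ω (k + 1)).toNat : ℤ))
      = (alphaK ω k : ℤ) * ω k - ω (k + 1) :=
    Int.toNat_of_nonneg (by have := hlt k h1 h2; omega)
  have h0 : (0 : ℕ) < n + 2 := by omega
  rw [Ghat]
  simp only [map_sub, map_mul, map_pow, map_prod]
  rw [show MvPolynomial.X (0 : Fin (n+2)) = MvPolynomial.X (((0:ℕ) : ℕ) : Fin (n+2)) by norm_num]
  rw [fA_X n ω θ β 0 h0, fA_X n ω θ β (k+1) (by omega), fA_X n ω θ β k (by omega)]
  have hp : (∏ j ∈ Finset.Ico 1 k,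
      (fA n ω θ β) (MvPolynomial.X ((j : ℕ) : Fin (n+2))) ^ (β k j).toNat)
      = ∏ j ∈ Finset.Ico 1 k, vB ω θ β j ^ (β k j).toNat :=
    Finset.prod_congr rfl (fun j hj => by
      rw [fA_X n ω θ β j (by have := (Finset.mem_Ico.mp hj).2; omega)])
  rw [hp]
  rw [show (fA n ω θ β) (MvPolynomial.C (θ k)) = Polynomial.C (LaurentPolynomial.C (θ k)) by
    rw [fA, MvPolynomial.aeval_C, algebraMap_BB]]
  rw [vB_succ ω θ β k h1, show vB ω θ β 0 = Polynomial.C (T 1) by rw [vB]]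
  rw [← Polynomial.C_pow, T_pow, mul_one, ← mul_assoc, ← Polynomial.C_mul, ← T_add]
  rw [show (((((alphaK ω k : ℤ)) * ω k - ω (k + 1)).toNat : ℤ))
      + (ω (k+1) - (alphaK ω k : ℤ) * ω k) = 0 by omega]
  rw [T_zero, Polynomial.C_1, one_mul, sub_self]


abbrev Qr := MvPolynomial (Fin (n+2)) ℂ ⧸ Ihat n ω θ β

noncomputable def xw : Qr n ω θ β :=
  Ideal.Quotient.mk (Ihat n ω θ β) (MvPolynomial.X (0 : Fin (n+2)))

abbrev Lr := Localization.Away (xw n ω θ β)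

variable (hlt : ∀ k, 1 ≤ k → k ≤ n → ω (k+1) < (alphaK ω k : ℤ) * ω k)

include hlt in
lemma mem_ker (a : MvPolynomial (Fin (n+2)) ℂ) (ha : a ∈ Ihat n ω θ β) :
    fA n ω θ β a = 0 := by
  have : Ihat n ω θ β ≤ RingHom.ker (fA n ω θ β).toRingHom := by
    rw [Ihat]
    apply Ideal.span_le.mpr
    rintro _ ⟨k, hk, rfl⟩
    exact fA_Ghat n ω θ β hlt k hk.1 hk.2
  exact this ha

noncomputable def fQ : Qr n ω θ β →ₐ[ℂ] BB :=
  Ideal.Quotient.liftₐ (Ihat n ω θ β) (fA n ω θ β) (mem_ker n ω θ β hlt)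

lemma fQ_mk (p : MvPolynomial (Fin (n+2)) ℂ) :
    fQ n ω θ β hlt (Ideal.Quotient.mk (Ihat n ω θ β) p) = fA n ω θ β p := by
  rw [fQ, Ideal.Quotient.liftₐ_apply]
  rfl

lemma fQ_units (y : Submonoid.powers (xw n ω θ β)) : IsUnit (fQ n ω θ β hlt y) := by
  obtain ⟨y, m, rfl⟩ := y
  rw [map_pow]
  apply IsUnit.pow
  rw [xw, fQ_mk]
  rw [show MvPolynomial.X (0 : Fin (n+2)) = MvPolynomial.X (((0:ℕ) : ℕ) : Fin (n+2)) by norm_num,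
    fA_X n ω θ β 0 (by omega), show vB ω θ β 0 = Polynomial.C (T 1) by rw [vB]]
  exact (isUnit_T 1).map Polynomial.C

noncomputable def FF : Lr n ω θ β →ₐ[ℂ] BB :=
  IsLocalization.liftAlgHom (M := Submonoid.powers (xw n ω θ β)) (S := Lr n ω θ β)
    (f := fQ n ω θ β hlt) (fQ_units n ω θ β hlt)

lemma FF_mk (q : Qr n ω θ β) :
    FF n ω θ β hlt (algebraMap (Qr n ω θ β) (Lr n ω θ β) q) = fQ n ω θ β hlt q := by
  rw [FF, IsLocalization.liftAlgHom_apply, IsLocalization.lift_eq]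
  rfl

noncomputable def uu : (Lr n ω θ β)ˣ :=
  (IsLocalization.map_units (Lr n ω θ β)
    (⟨xw n ω θ β, Submonoid.mem_powers _⟩ : Submonoid.powers (xw n ω θ β))).unit

lemma uu_val : (uu n ω θ β : Lr n ω θ β)
    = algebraMap (Qr n ω θ β) (Lr n ω θ β) (xw n ω θ β) := IsUnit.unit_spec _

noncomputable def phi : LaurentPolynomial ℂ →ₐ[ℂ] Lr n ω θ β :=
  AddMonoidAlgebra.lift ℂ (Lr n ω θ β) ℤ
    ((Units.coeHom (Lr n ω θ β)).comp (zpowersHom (Lr n ω θ β)ˣ (uu n ω θ β)))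

lemma phi_T (m : ℤ) : phi n ω θ β (T m) = ((uu n ω θ β ^ m : (Lr n ω θ β)ˣ) : Lr n ω θ β) := by
  have : (T m : LaurentPolynomial ℂ) = AddMonoidAlgebra.single m 1 := rfl
  rw [phi, this, AddMonoidAlgebra.lift_single]
  simp

noncomputable def psi : BB →ₐ[ℂ] Lr n ω θ β :=
  Polynomial.aevalTower (phi n ω θ β)
    (algebraMap (Qr n ω θ β) (Lr n ω θ β)
      (Ideal.Quotient.mk (Ihat n ω θ β) (MvPolynomial.X (1 : Fin (n+2)))))


lemma psi_CT (m : ℤ) : psi n ω θ β (Polynomial.C (T m))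
    = ((uu n ω θ β ^ m : (Lr n ω θ β)ˣ) : Lr n ω θ β) := by
  rw [psi, Polynomial.aevalTower_C, phi_T]

lemma psi_CC (z : ℂ) :
    psi n ω θ β (Polynomial.C (LaurentPolynomial.C z)) = algebraMap ℂ (Lr n ω θ β) z := by
  rw [psi, Polynomial.aevalTower_C, LaurentPolynomial.C_eq_algebraMap, AlgHom.commutes]

/-- The map `A → Lr` -/
noncomputable def chi : MvPolynomial (Fin (n+2)) ℂ →+* Lr n ω θ β :=
  (algebraMap (Qr n ω θ β) (Lr n ω θ β)).comp (Ideal.Quotient.mk (Ihat n ω θ β))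

lemma chi_C (z : ℂ) : chi n ω θ β (MvPolynomial.C z) = algebraMap ℂ (Lr n ω θ β) z := by
  rw [chi, RingHom.comp_apply, ← MvPolynomial.algebraMap_eq, ← Ideal.Quotient.algebraMap_eq,
    ← IsScalarTower.algebraMap_apply, ← IsScalarTower.algebraMap_apply]

lemma chi_Ghat (k : ℕ) (h1 : 1 ≤ k) (h2 : k ≤ n) : chi n ω θ β (Ghat n ω θ β k) = 0 := by
  have hmem : Ghat n ω θ β k ∈ Ihat n ω θ β := by
    rw [Ihat]; exact Ideal.subset_span (Set.mem_image_of_mem _ ⟨h1, h2⟩)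
  rw [chi, RingHom.comp_apply, Ideal.Quotient.eq_zero_iff_mem.mpr hmem, map_zero]

include hlt in
lemma psi_vB : ∀ i, i ≤ n+1 →
    psi n ω θ β (vB ω θ β i)
      = chi n ω θ β (MvPolynomial.X ((i : ℕ) : Fin (n+2))) := by
  intro i
  induction i using Nat.strong_induction_on with
  | _ i ih =>
    match i with
    | 0 =>
      intro _
      rw [show vB ω θ β 0 = Polynomial.C (T 1) by rw [vB], psi_CT, zpow_one, uu_val,
        show ((0 : ℕ) : Fin (n+2)) = 0 by norm_num]
      rfl
    | 1 =>
      intro _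
      rw [show vB ω θ β 1 = Polynomial.X by rw [vB], psi, Polynomial.aevalTower_X,
        show ((1 : ℕ) : Fin (n+2)) = 1 by norm_num]
      rfl
    | (k+2) =>
      intro hile
      have hk1 : 1 ≤ k+1 := by omega
      have hkn : k+1 ≤ n := by omega
      have hlk := hlt (k+1) hk1 hkn
      have hEz : ((((alphaK ω (k+1) : ℤ) * ω (k+1) - ω (k+1+1)).toNat : ℤ))
          = (alphaK ω (k+1) : ℤ) * ω (k+1) - ω (k+1+1) := Int.toNat_of_nonneg (by omega)
      -- the relation coming from `Ghat (k+1) = 0` in the localization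
      have hG0 := chi_Ghat n ω θ β (k+1) hk1 hkn
      rw [Ghat] at hG0
      simp only [map_sub, map_mul, map_pow, map_prod] at hG0
      have hrel := sub_eq_zero.mp hG0
      rw [chi_C] at hrel
      -- compute the left side
      rw [show vB ω θ β (k+2) = vB ω θ β ((k+1)+1) from rfl, vB_succ ω θ β (k+1) hk1,
        map_mul, map_sub, map_pow, psi_CT, map_mul, psi_CC, map_prod,
        ih (k+1) (by omega) (by omega)]
      have hp : (∏ j ∈ Finset.Ico 1 (k+1),
          psi n ω θ β (vB ω θ β j ^ (β (k+1) j).toNat))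
          = ∏ j ∈ Finset.Ico 1 (k+1),
            chi n ω θ β (MvPolynomial.X ((j : ℕ) : Fin (n+2))) ^ (β (k+1) j).toNat :=
        Finset.prod_congr rfl (fun j hj => by
          have := (Finset.mem_Ico.mp hj).2
          rw [map_pow, ih j (by omega) (by omega)])
      rw [hp, ← hrel]
      have hXw : chi n ω θ β (MvPolynomial.X (0 : Fin (n+2)))
          = ((uu n ω θ β : (Lr n ω θ β)ˣ) : Lr n ω θ β) := by
        rw [uu_val]; rfl
      rw [hXw, ← mul_assoc,
        show ((uu n ω θ β : (Lr n ω θ β)ˣ) : Lr n ω θ β)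
            ^ (((alphaK ω (k+1) : ℤ)) * ω (k+1) - ω (k+1+1)).toNat
          = ((uu n ω θ β ^ (((((alphaK ω (k+1) : ℤ)) * ω (k+1) - ω (k+1+1)).toNat : ℤ))
              : (Lr n ω θ β)ˣ) : Lr n ω θ β) by
          rw [zpow_natCast, Units.val_pow_eq_pow_val],
        ← Units.val_mul, ← zpow_add,
        show (ω (k+1+1) - (alphaK ω (k+1) : ℤ) * ω (k+1))
            + ((((alphaK ω (k+1) : ℤ)) * ω (k+1) - ω (k+1+1)).toNat : ℤ) = 0 by omega,
        zpow_zero, Units.val_one, one_mul]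


include hlt in
lemma comp_psi :
    (psi n ω θ β).comp (FF n ω θ β hlt) = AlgHom.id ℂ (Lr n ω θ β) := by
  have hcomp : ((psi n ω θ β).comp (fQ n ω θ β hlt)).comp
        (Ideal.Quotient.mkₐ ℂ (Ihat n ω θ β))
      = (IsScalarTower.toAlgHom ℂ (Qr n ω θ β) (Lr n ω θ β)).comp
        (Ideal.Quotient.mkₐ ℂ (Ihat n ω θ β)) := by
    apply MvPolynomial.algHom_ext
    intro i
    simp only [AlgHom.comp_apply, Ideal.Quotient.mkₐ_eq_mk]
    rw [fQ_mk,
      show (fA n ω θ β) (MvPolynomial.X i) = vB ω θ β i.val from MvPolynomial.aeval_X _ i,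
      psi_vB n ω θ β hlt i.val (Fin.is_le i), Fin.cast_val_eq_self]
    rfl
  have hmain : ∀ q, psi n ω θ β (fQ n ω θ β hlt q)
      = algebraMap (Qr n ω θ β) (Lr n ω θ β) q := by
    intro q
    obtain ⟨p, rfl⟩ := Ideal.Quotient.mk_surjective q
    exact DFunLike.congr_fun hcomp p
  have hring : ((psi n ω θ β).comp (FF n ω θ β hlt)).toRingHom
      = (AlgHom.id ℂ (Lr n ω θ β)).toRingHom := by
    refine IsLocalization.ringHom_ext (S := Lr n ω θ β) (P := Lr n ω θ β)
      (Submonoid.powers (xw n ω θ β)) ?_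
    apply RingHom.ext
    intro q
    simp only [RingHom.comp_apply]
    show psi n ω θ β (FF n ω θ β hlt (algebraMap _ _ q)) = _
    rw [FF_mk, hmain]
    rfl
  exact AlgHom.coe_ringHom_injective hring

include hlt in
lemma cT_pow (m : ℤ) :
    FF n ω θ β hlt ((uu n ω θ β ^ m : (Lr n ω θ β)ˣ) : Lr n ω θ β) = Polynomial.C (T m) := by
  set Fm : Lr n ω θ β →* BB := MonoidHomClass.toMonoidHom (FF n ω θ β hlt) with hFm
  set c : BBˣ := Units.map Fm (uu n ω θ β) with hcdef
  have hc : (c : BB) = Polynomial.C (T 1) := by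
    show Fm ((uu n ω θ β : (Lr n ω θ β)ˣ) : Lr n ω θ β) = _
    show FF n ω θ β hlt _ = _
    rw [uu_val, FF_mk, xw, fQ_mk,
      show MvPolynomial.X (0 : Fin (n+2))
        = MvPolynomial.X (((0:ℕ) : ℕ) : Fin (n+2)) by norm_num,
      fA_X n ω θ β 0 (by omega), show vB ω θ β 0 = Polynomial.C (T 1) by rw [vB]]
  have g2mul : ∀ a b : Multiplicative ℤ,
      Polynomial.C (T (Multiplicative.toAdd (a * b)) : LaurentPolynomial ℂ)
        = Polynomial.C (T (Multiplicative.toAdd a)) * Polynomial.C (T (Multiplicative.toAdd b)) := by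
    intro a b
    rw [← Polynomial.C_mul, ← T_add]
    rfl
  set g2 : Multiplicative ℤ →* BB :=
    { toFun := fun m => Polynomial.C (T (Multiplicative.toAdd m)),
      map_one' := by simp,
      map_mul' := g2mul } with hg2
  have hext : (Units.coeHom BB).comp (zpowersHom BBˣ c) = g2 := by
    apply MonoidHom.ext_mint
    simp only [MonoidHom.comp_apply, zpowersHom_apply, Units.coeHom_apply, hg2]
    simpa using hc
  have hkey : ((c ^ m : BBˣ) : BB) = Polynomial.C (T m) := by
    have := DFunLike.congr_fun hext (Multiplicative.ofAdd m)
    rw [hg2] at this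
    simpa using this
  calc FF n ω θ β hlt ((uu n ω θ β ^ m : (Lr n ω θ β)ˣ) : Lr n ω θ β)
      = Fm ((uu n ω θ β ^ m : (Lr n ω θ β)ˣ) : Lr n ω θ β) := rfl
    _ = ((Units.map Fm (uu n ω θ β ^ m) : BBˣ) : BB) := rfl
    _ = ((c ^ m : BBˣ) : BB) := by rw [map_zpow]
    _ = Polynomial.C (T m) := hkey

include hlt in
lemma comp_FF : (FF n ω θ β hlt).comp (psi n ω θ β) = AlgHom.id ℂ BB := by
  apply Polynomial.algHom_ext'
  · apply AddMonoidAlgebra.algHom_ext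
    intro m
    show FF n ω θ β hlt (psi n ω θ β (Polynomial.C (T m))) = Polynomial.C (T m)
    rw [psi_CT, cT_pow n ω θ β hlt]
    exact Subsingleton.elim _ _
  · show FF n ω θ β hlt (psi n ω θ β Polynomial.X) = Polynomial.X
    rw [psi, Polynomial.aevalTower_X, FF_mk, fQ_mk,
      show (fA n ω θ β) (MvPolynomial.X (1 : Fin (n+2)))
        = vB ω θ β ((1 : Fin (n+2)) : ℕ) from MvPolynomial.aeval_X _ _,
      Fin.val_one, show vB ω θ β 1 = Polynomial.X by rw [vB]]

end Aux5


/-- The localization of `Â/Î` at the image of `ŵ` is isomorphic as a `ℂ`-algebra to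
`ℂ[ŵ, ŵ⁻¹, ŷ₁]` (realized as `Polynomial (LaurentPolynomial ℂ)`). -/
theorem stmt5 (n : ℕ) (ω : ℕ → ℤ) (θ : ℕ → ℂ) (β : ℕ → ℕ → ℤ)
    (hω : IsKeySequence n ω) (hprim : IsPrimitive n ω)
    (hθ : ∀ k, 1 ≤ k → k ≤ n → θ k ≠ 0) (hβ : IsRepTuple n ω β) :
    Nonempty
      (Localization.Away
          (Ideal.Quotient.mk (Ihat n ω θ β) (MvPolynomial.X (0 : Fin (n + 2)))) ≃ₐ[ℂ]
        Polynomial (LaurentPolynomial ℂ)) :=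
  ⟨AlgEquiv.ofAlgHom (Aux5.FF n ω θ β hω.2.2) (Aux5.psi n ω θ β)
    (Aux5.comp_FF n ω θ β hω.2.2) (Aux5.comp_psi n ω θ β hω.2.2)⟩
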